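/- Let 0 < q < 1, K a positive integer, P > 0, and α₀, α₁ ∈ ℂ. Set q̃ = q^K and assume q̃²P²(|α₀|²−|α₁|²)² ≠ 1. Define β = (q̃·sqrt(2P(|α₀|²+|α₁|²) + P²(|α₀|⁴+|α₁|⁴) − 2P²|α₀|²|α₁|²(1−2q̃²) + 1) − q̃²P(|α₀|²+|α₁|²) − 1) / (q̃²P²(|α₀|²−|α₁|²)² − 1). Then 0 ≤ β ≤ 1 − q̃ and q̃·sqrt((1 + Pβ(|α₀|²+|α₁|²))² − (2Pβ|α₀||α₁|)²) = 1 − β. -/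

import Mathlib

set_option maxHeartbeats 1000000

/-- Equation (16): the explicit closed-form solution `β` of the erasure fixed-point
equation `q̃ √(a²-b²) = 1-β` for the soft-handoff model with multi-cell processing and
adaptive power control, where `q̃ = q^K`. -/
theorem explicit_beta_solves_fixed_point
    (q : ℝ) (hq0 : 0 < q) (hq1 : q < 1) (K : ℕ) (hK : 0 < K)
    (P : ℝ) (hP : 0 < P) (α₀ α₁ : ℂ)
    (qt : ℝ) (hqt : qt = q ^ K)
    (hden : qt ^ 2 * P ^ 2 * (‖α₀‖ ^ 2 - ‖α₁‖ ^ 2) ^ 2 ≠ 1)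
    (β : ℝ)
    (hβ : β = (qt * Real.sqrt (2 * P * (‖α₀‖ ^ 2 + ‖α₁‖ ^ 2) +
        P ^ 2 * (‖α₀‖ ^ 4 + ‖α₁‖ ^ 4) -
        2 * P ^ 2 * ‖α₀‖ ^ 2 * ‖α₁‖ ^ 2 * (1 - 2 * qt ^ 2) + 1) -
        qt ^ 2 * P * (‖α₀‖ ^ 2 + ‖α₁‖ ^ 2) - 1) /
      (qt ^ 2 * P ^ 2 * (‖α₀‖ ^ 2 - ‖α₁‖ ^ 2) ^ 2 - 1)) :
    0 ≤ β ∧ β ≤ 1 - qt ∧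
      qt * Real.sqrt ((1 + P * β * (‖α₀‖ ^ 2 + ‖α₁‖ ^ 2)) ^ 2 -
        (2 * P * β * ‖α₀‖ * ‖α₁‖) ^ 2) = 1 - β := by
  set a := ‖α₀‖ with hadef
  set b := ‖α₁‖ with hbdef
  have ha : 0 ≤ a := norm_nonneg _
  have hb : 0 ≤ b := norm_nonneg _
  have ht0 : 0 < qt := hqt ▸ pow_pos hq0 K
  have ht1 : qt < 1 := hqt ▸ pow_lt_one₀ hq0.le hq1 hK.ne'
  have h1t2 : 0 < 1 - qt ^ 2 := by nlinarith
  set R := 2 * P * (a ^ 2 + b ^ 2) + P ^ 2 * (a ^ 4 + b ^ 4) -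
      2 * P ^ 2 * a ^ 2 * b ^ 2 * (1 - 2 * qt ^ 2) + 1 with hRdef
  have hR : 0 ≤ R := by
    rw [hRdef]
    nlinarith [sq_nonneg (P * (a ^ 2 - b ^ 2)), sq_nonneg (P * a * b * qt),
      mul_nonneg hP.le (add_nonneg (sq_nonneg a) (sq_nonneg b))]
  have hsq : Real.sqrt R ^ 2 = R := Real.sq_sqrt hR
  have hsqnn : 0 ≤ Real.sqrt R := Real.sqrt_nonneg _
  have hD : qt ^ 2 * P ^ 2 * (a ^ 2 - b ^ 2) ^ 2 - 1 ≠ 0 := sub_ne_zero.mpr hden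
  -- β * D = numerator
  have h1 : β * (qt ^ 2 * P ^ 2 * (a ^ 2 - b ^ 2) ^ 2 - 1) =
      qt * Real.sqrt R - qt ^ 2 * P * (a ^ 2 + b ^ 2) - 1 := by
    rw [hβ]; exact div_mul_cancel₀ _ hD
  -- alternative expression: β = (1 - qt^2) / (sqrt-part + c)
  have hucpos : 0 < qt * Real.sqrt R + (qt ^ 2 * P * (a ^ 2 + b ^ 2) + 1) := by
    positivity
  have hβ' : β = (1 - qt ^ 2) / (qt * Real.sqrt R + (qt ^ 2 * P * (a ^ 2 + b ^ 2) + 1)) := by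
    rw [hβ, div_eq_div_iff hD hucpos.ne']
    linear_combination qt ^ 2 * hsq + qt ^ 2 * hRdef
  have hβ0 : 0 ≤ β := by
    rw [hβ']
    exact div_nonneg h1t2.le hucpos.le
  -- sqrt R ≥ 1 - qt*P*(a^2+b^2)
  have hsge : 1 - qt * P * (a ^ 2 + b ^ 2) ≤ Real.sqrt R := by
    have h2 : Real.sqrt ((1 - qt * P * (a ^ 2 + b ^ 2)) ^ 2) ≤ Real.sqrt R := by
      apply Real.sqrt_le_sqrt
      rw [hRdef]
      nlinarith [sq_nonneg (P * (a ^ 2 - b ^ 2)), h1t2,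
        mul_nonneg (mul_nonneg hP.le (add_nonneg (sq_nonneg a) (sq_nonneg b))) ht0.le,
        mul_nonneg hP.le (add_nonneg (sq_nonneg a) (sq_nonneg b)),
        mul_nonneg (sq_nonneg (P * (a ^ 2 - b ^ 2))) h1t2.le]
    rw [Real.sqrt_sq_eq_abs] at h2
    calc 1 - qt * P * (a ^ 2 + b ^ 2) ≤ |1 - qt * P * (a ^ 2 + b ^ 2)| := le_abs_self _
      _ ≤ Real.sqrt R := h2
  have hucge : 1 + qt ≤ qt * Real.sqrt R + (qt ^ 2 * P * (a ^ 2 + b ^ 2) + 1) := by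
    have key := mul_le_mul_of_nonneg_left hsge ht0.le
    linarith [key]
  have hβle : β ≤ 1 - qt := by
    rw [hβ', div_le_iff₀ hucpos]
    have key := mul_le_mul_of_nonneg_left hucge (by linarith : (0:ℝ) ≤ 1 - qt)
    linarith [key]
  refine ⟨hβ0, hβle, ?_⟩
  have h1β : 0 ≤ 1 - β := by linarith
  have hquad : (qt ^ 2 * P ^ 2 * (a ^ 2 - b ^ 2) ^ 2 - 1) * β ^ 2 +
      2 * (qt ^ 2 * P * (a ^ 2 + b ^ 2) + 1) * β + (qt ^ 2 - 1) = 0 := by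
    apply mul_left_cancel₀ hD
    rw [mul_zero]
    linear_combination (β * (qt ^ 2 * P ^ 2 * (a ^ 2 - b ^ 2) ^ 2 - 1) +
      (qt * Real.sqrt R - qt ^ 2 * P * (a ^ 2 + b ^ 2) - 1) +
      2 * (qt ^ 2 * P * (a ^ 2 + b ^ 2) + 1)) * h1 + qt ^ 2 * hsq + qt ^ 2 * hRdef
  have hinner : (1 + P * β * (a ^ 2 + b ^ 2)) ^ 2 - (2 * P * β * a * b) ^ 2 =
      ((1 - β) / qt) ^ 2 := by
    rw [div_pow, eq_div_iff (by positivity : qt ^ 2 ≠ 0)]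
    linear_combination hquad
  rw [hinner, Real.sqrt_sq (by positivity), mul_comm, div_mul_cancel₀ _ ht0.ne']
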